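/- Let G be a connected d-regular graph on n vertices which has perfect state transfer between vertices u and v at time τ, i.e., |⟨e_v, e^{−iτA(G)} e_u⟩| = 1. Let H be the graph obtained from the cone Ĝ = K_1 + G by attaching a one-way infinite path to the apex vertex. Then |⟨e_v, e^{−iτA(H)} e_u⟩| ≥ 1 − 2/n; in particular, perfect state transfer between u and v survives the attached tail asymptotically. -/

import Mathlib

noncomputable section

open Matrix

/-- Vertices of the cone `Ĝ = K_1 + G` with a one-way infinite path attached at the apex:
`Sum.inl a` is the vertex `a` of `G`, `Sum.inr 0` is the apex `c`, and `Sum.inr (j+1)` is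
the tail vertex `q_{j+1}`. -/
abbrev ConeTailV (n : ℕ) := Fin n ⊕ ℕ

/-- Adjacency in `H`: the edges of `G`, the edges from the apex `c` to all of `V(G)`,
and the path edges `c q_1, q_1 q_2, q_2 q_3, …`. -/
def coneTailAdj (n : ℕ) (G : SimpleGraph (Fin n)) (x y : ConeTailV n) : Prop :=
  (∃ a b : Fin n, G.Adj a b ∧ x = Sum.inl a ∧ y = Sum.inl b) ∨
  (∃ a : Fin n, (x = Sum.inl a ∧ y = Sum.inr 0) ∨ (y = Sum.inl a ∧ x = Sum.inr 0)) ∨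
  (∃ j : ℕ, (x = Sum.inr j ∧ y = Sum.inr (j + 1)) ∨ (y = Sum.inr j ∧ x = Sum.inr (j + 1)))

/-- The Hilbert space `ℓ²(V(H))`. -/
abbrev coneTailSpace (n : ℕ) := lp (fun _ : ConeTailV n => ℂ) 2

/-- The standard orthonormal basis vector `e_w` of `ℓ²(V(H))`. -/
def stdVec {n : ℕ} (w : ConeTailV n) : coneTailSpace n := lp.single 2 w 1

open scoped Classical

namespace ConeTailPSTAux

open NormedSpace

variable {n : ℕ}

/-- The embedding of `ℂ^n` into `ℓ²(V(H))` (as the coordinates of the vertices of `G`),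
as a linear map. -/
def Jlin (n : ℕ) : (Fin n → ℂ) →ₗ[ℂ] coneTailSpace n where
  toFun g := ∑ a, g a • stdVec (Sum.inl a)
  map_add' g h := by simp [add_smul, Finset.sum_add_distrib]
  map_smul' c g := by simp [smul_smul, Finset.smul_sum]

/-- The embedding of `ℂ^n` into `ℓ²(V(H))`, as a continuous linear map. -/
def Jmap (n : ℕ) : (Fin n → ℂ) →L[ℂ] coneTailSpace n := (Jlin n).toContinuousLinearMap

lemma Jmap_eq (g : Fin n → ℂ) : Jmap n g = ∑ a, g a • stdVec (Sum.inl a) := rfl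

lemma inner_stdVec (x : ConeTailV n) (f : coneTailSpace n) :
    (inner ℂ (stdVec x) f : ℂ) = f x := by
  simp [stdVec, lp.inner_single_left]

lemma Jmap_apply_inl (g : Fin n → ℂ) (a : Fin n) :
    (Jmap n g : ∀ _ : ConeTailV n, ℂ) (Sum.inl a) = g a := by
  rw [Jmap_eq, lp.coeFn_sum]
  simp [stdVec, lp.coeFn_smul, lp.single_apply, Pi.single_apply]

lemma Jmap_apply_inr (g : Fin n → ℂ) (j : ℕ) :
    (Jmap n g : ∀ _ : ConeTailV n, ℂ) (Sum.inr j) = 0 := by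
  rw [Jmap_eq, lp.coeFn_sum]
  simp [stdVec, lp.coeFn_smul, lp.single_apply]

lemma inner_stdVec_Jmap (g : Fin n → ℂ) (a : Fin n) :
    (inner ℂ (stdVec (Sum.inl a : ConeTailV n)) (Jmap n g) : ℂ) = g a := by
  rw [inner_stdVec, Jmap_apply_inl]

lemma stdVec_inl_eq_Jmap (u : Fin n) :
    stdVec (Sum.inl u : ConeTailV n) = Jmap n (Pi.single u 1) := by
  apply lp.ext; funext x
  rcases x with a | j
  · rw [Jmap_apply_inl]
    simp [stdVec, lp.single_apply, Pi.single_apply, Sum.inl.injEq, eq_comm]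
  · rw [Jmap_apply_inr]
    simp [stdVec, lp.single_apply]

lemma adj_inl_inl (G : SimpleGraph (Fin n)) (b a : Fin n) :
    coneTailAdj n G (Sum.inl b) (Sum.inl a) ↔ G.Adj b a := by
  simp [coneTailAdj]

lemma adj_inr_inl (G : SimpleGraph (Fin n)) (j : ℕ) (a : Fin n) :
    coneTailAdj n G (Sum.inr j) (Sum.inl a) ↔ j = 0 := by
  constructor
  · rintro (⟨_, _, _, h, _⟩ | ⟨c, (⟨h, _⟩ | ⟨_, h⟩)⟩ | ⟨k, (⟨_, h⟩ | ⟨h, _⟩)⟩) <;>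
      simp_all
  · rintro rfl
    exact Or.inr (Or.inl ⟨a, Or.inr ⟨rfl, rfl⟩⟩)

/-- How the adjacency operator of `H` acts on vectors supported on `V(G)`. -/
lemma A_Jmap (G : SimpleGraph (Fin n)) [DecidableRel G.Adj]
    (A : coneTailSpace n →L[ℂ] coneTailSpace n)
    (hA : ∀ x y : ConeTailV n, (inner ℂ (stdVec x) (A (stdVec y)) : ℂ)
      = if coneTailAdj n G x y then 1 else 0) (g : Fin n → ℂ) :
    A (Jmap n g) = Jmap n (G.adjMatrix ℂ *ᵥ g) + (∑ a, g a) • stdVec (Sum.inr 0) := by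
  apply lp.ext; funext x
  have h1 : ∀ (f : coneTailSpace n) (x : ConeTailV n), (f : ∀ _ : ConeTailV n, ℂ) x
      = (inner ℂ (stdVec x) f : ℂ) := fun f x => (inner_stdVec x f).symm
  have hL : (A (Jmap n g) : ∀ _ : ConeTailV n, ℂ) x
      = ∑ a, g a * (if coneTailAdj n G x (Sum.inl a) then 1 else 0) := by
    rw [h1, Jmap_eq, map_sum, inner_sum]
    simp only [_root_.map_smul, inner_smul_right, hA]
  rw [hL, lp.coeFn_add, Pi.add_apply, lp.coeFn_smul, Pi.smul_apply]
  rcases x with b | j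
  · rw [Jmap_apply_inl]
    simp only [adj_inl_inl]
    simp [stdVec, lp.single_apply, Matrix.mulVec, dotProduct,
      SimpleGraph.adjMatrix_apply, mul_comm]
  · rw [Jmap_apply_inr]
    simp only [adj_inr_inl]
    rcases j with _ | j <;> simp [stdVec, lp.single_apply]

/-- Column sums of the adjacency matrix of a regular graph. -/
lemma sum_mulVec {d : ℕ} (G : SimpleGraph (Fin n)) [DecidableRel G.Adj]
    (hreg : G.IsRegularOfDegree d) (g : Fin n → ℂ) :
    ∑ b, (G.adjMatrix ℂ *ᵥ g) b = (d : ℂ) * ∑ a, g a := by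
  simp only [Matrix.mulVec, dotProduct]
  rw [Finset.sum_comm, Finset.mul_sum]
  refine Finset.sum_congr rfl fun a _ => ?_
  rw [← Finset.sum_mul]
  congr 1
  have : ∀ b, (G.adjMatrix ℂ) b a = if G.Adj a b then 1 else 0 := by
    intro b; simp [SimpleGraph.adjMatrix_apply, G.adj_comm]
  simp_rw [this]
  rw [Finset.sum_boole, ← SimpleGraph.neighborFinset_eq_filter]
  exact congrArg Nat.cast (hreg a)

lemma exp_apply_eq_tsum {H : Type*} [NormedAddCommGroup H] [NormedSpace ℂ H] [CompleteSpace H]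
    (B : H →L[ℂ] H) (x : H) :
    exp B x = ∑' k : ℕ, (k.factorial : ℂ)⁻¹ • (B ^ k) x := by
  have h1 : exp B = ∑' k : ℕ, (k.factorial : ℂ)⁻¹ • B ^ k := by
    rw [exp_eq_tsum ℂ]
  rw [h1, ← ContinuousLinearMap.apply_apply (𝕜 := ℂ) x (∑' k : ℕ, (k.factorial : ℂ)⁻¹ • B ^ k),
    ContinuousLinearMap.map_tsum (ContinuousLinearMap.apply ℂ H x)
      (expSeries_summable' (𝕂 := ℂ) B)]
  simp [ContinuousLinearMap.apply_apply]

/-- Summing the coordinates, as a continuous linear map. -/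
def sumCLM (n : ℕ) : (Fin n → ℂ) →L[ℂ] ℂ :=
  LinearMap.toContinuousLinearMap
    { toFun := fun h => ∑ a, h a
      map_add' := fun h₁ h₂ => by simp [Finset.sum_add_distrib]
      map_smul' := fun r h => by simp [Finset.mul_sum] }

/-- Multiplication of a matrix by a fixed vector, as a continuous linear map in the matrix. -/
def mulVecCLM (n : ℕ) (g : Fin n → ℂ) : Matrix (Fin n) (Fin n) ℂ →L[ℂ] (Fin n → ℂ) :=
  LinearMap.toContinuousLinearMap
    { toFun := fun N => N *ᵥ g
      map_add' := fun _ _ => Matrix.add_mulVec _ _ _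
      map_smul' := fun r N => Matrix.smul_mulVec r N g }

lemma mulVecCLM_apply (g : Fin n → ℂ) (N : Matrix (Fin n) (Fin n) ℂ) :
    mulVecCLM n g N = N *ᵥ g := rfl

lemma sumCLM_apply (h : Fin n → ℂ) : sumCLM n h = ∑ a, h a := rfl

lemma exp_matrix_mulVec (M : Matrix (Fin n) (Fin n) ℂ) (g : Fin n → ℂ) :
    exp M *ᵥ g = ∑' k : ℕ, (k.factorial : ℂ)⁻¹ • (M ^ k *ᵥ g) := by
  letI : SeminormedRing (Matrix (Fin n) (Fin n) ℂ) := Matrix.linftyOpSemiNormedRing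
  letI : NormedRing (Matrix (Fin n) (Fin n) ℂ) := Matrix.linftyOpNormedRing
  letI : NormedAlgebra ℂ (Matrix (Fin n) (Fin n) ℂ) := Matrix.linftyOpNormedAlgebra
  have h1 : exp M = ∑' k : ℕ, (k.factorial : ℂ)⁻¹ • M ^ k := by rw [exp_eq_tsum ℂ]
  rw [h1, ← mulVecCLM_apply g]
  refine ((mulVecCLM n g).map_tsum (expSeries_summable' (𝕂 := ℂ) M)).trans ?_
  congr 1; funext k
  rw [mulVecCLM_apply, Matrix.smul_mulVec]

lemma summable_mulVec (M : Matrix (Fin n) (Fin n) ℂ) (g : Fin n → ℂ) :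
    Summable (fun k : ℕ => (k.factorial : ℂ)⁻¹ • (M ^ k *ᵥ g)) := by
  letI : SeminormedRing (Matrix (Fin n) (Fin n) ℂ) := Matrix.linftyOpSemiNormedRing
  letI : NormedRing (Matrix (Fin n) (Fin n) ℂ) := Matrix.linftyOpNormedRing
  letI : NormedAlgebra ℂ (Matrix (Fin n) (Fin n) ℂ) := Matrix.linftyOpNormedAlgebra
  have := (expSeries_summable' (𝕂 := ℂ) M).map (mulVecCLM n g) (mulVecCLM n g).continuous
  refine this.congr fun k => ?_
  simp [Function.comp, mulVecCLM_apply, Matrix.smul_mulVec]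

/-- The key commutation: on sum-zero vectors supported on `V(G)`, the exponential of
(a multiple of) the adjacency operator of `H` acts as the matrix exponential of the
adjacency matrix of `G`; moreover sum-zero is preserved. -/
lemma exp_cA_Jmap {d : ℕ} (G : SimpleGraph (Fin n)) [DecidableRel G.Adj]
    (hreg : G.IsRegularOfDegree d)
    (A : coneTailSpace n →L[ℂ] coneTailSpace n)
    (hA : ∀ x y : ConeTailV n, (inner ℂ (stdVec x) (A (stdVec y)) : ℂ)
      = if coneTailAdj n G x y then 1 else 0)
    (c : ℂ) (g : Fin n → ℂ) (hg : ∑ a, g a = 0) :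
    exp (c • A) (Jmap n g) = Jmap n (exp (c • G.adjMatrix ℂ) *ᵥ g)
      ∧ ∑ a, (exp (c • G.adjMatrix ℂ) *ᵥ g) a = 0 := by
  set M : Matrix (Fin n) (Fin n) ℂ := c • G.adjMatrix ℂ with hM
  have hpow : ∀ k : ℕ, ((c • A) ^ k) (Jmap n g) = Jmap n (M ^ k *ᵥ g)
      ∧ ∑ a, (M ^ k *ᵥ g) a = 0 := by
    intro k; induction k with
    | zero => simp [Matrix.one_mulVec, hg]
    | succ k ih =>
      have hMv : M ^ (k + 1) *ᵥ g = M *ᵥ (M ^ k *ᵥ g) := by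
        rw [pow_succ', Matrix.mulVec_mulVec]
      have hsum : ∑ a, (M *ᵥ (M ^ k *ᵥ g)) a = 0 := by
        rw [hM, Matrix.smul_mulVec]
        simp only [Pi.smul_apply, smul_eq_mul, ← Finset.mul_sum]
        rw [sum_mulVec G hreg, ih.2]
        ring
      refine ⟨?_, by rw [hMv]; exact hsum⟩
      rw [pow_succ', ContinuousLinearMap.mul_apply, ih.1, ContinuousLinearMap.smul_apply,
        A_Jmap G A hA, ih.2, hMv, hM, Matrix.smul_mulVec]
      simp [_root_.map_smul]
  have h1 : exp (c • A) (Jmap n g) = ∑' k : ℕ, (k.factorial : ℂ)⁻¹ • Jmap n (M ^ k *ᵥ g) := by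
    rw [exp_apply_eq_tsum]
    congr 1; funext k; rw [(hpow k).1]
  have h2 : exp (c • A) (Jmap n g) = Jmap n (exp M *ᵥ g) := by
    rw [h1, exp_matrix_mulVec, ContinuousLinearMap.map_tsum _ (summable_mulVec M g)]
    congr 1; funext k
    rw [_root_.map_smul]
  refine ⟨h2, ?_⟩
  rw [exp_matrix_mulVec, ← sumCLM_apply,
    ContinuousLinearMap.map_tsum _ (summable_mulVec M g)]
  have : ∀ k : ℕ, sumCLM n ((k.factorial : ℂ)⁻¹ • (M ^ k *ᵥ g)) = 0 := by
    intro k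
    rw [_root_.map_smul, sumCLM_apply, (hpow k).2, smul_zero]
  simp [this]

/-- Action of the matrix exponential on the all-ones vector, for a regular graph. -/
lemma exp_matrix_mulVec_const {d : ℕ} (G : SimpleGraph (Fin n)) [DecidableRel G.Adj]
    (hreg : G.IsRegularOfDegree d) (c : ℂ) :
    exp (c • G.adjMatrix ℂ) *ᵥ (Function.const (Fin n) (1 : ℂ))
      = exp (c * d) • Function.const (Fin n) (1 : ℂ) := by
  set M : Matrix (Fin n) (Fin n) ℂ := c • G.adjMatrix ℂ with hM
  set one : Fin n → ℂ := Function.const (Fin n) (1 : ℂ) with hone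
  have hpow : ∀ k : ℕ, M ^ k *ᵥ one = (c * d) ^ k • one := by
    intro k; induction k with
    | zero => simp [Matrix.one_mulVec]
    | succ k ih =>
      rw [pow_succ', ← Matrix.mulVec_mulVec, ih, Matrix.mulVec_smul, hM,
        Matrix.smul_mulVec]
      have : G.adjMatrix ℂ *ᵥ one = (d : ℂ) • one := by
        funext b
        rw [hone]
        rw [SimpleGraph.adjMatrix_mulVec_const_apply_of_regular hreg]
        simp
      rw [this, smul_smul, smul_smul]
      congr 1
      ring
  let L : ℂ →L[ℂ] (Fin n → ℂ) :=
    LinearMap.toContinuousLinearMap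
      { toFun := fun z => z • one
        map_add' := fun z₁ z₂ => add_smul _ _ _
        map_smul' := fun r z => by simp [smul_smul] }
  have hL : ∀ z : ℂ, L z = z • one := fun _ => rfl
  rw [exp_matrix_mulVec]
  have h1 : ∀ k : ℕ, (k.factorial : ℂ)⁻¹ • (M ^ k *ᵥ one)
      = L ((k.factorial : ℂ)⁻¹ • (c * d) ^ k) := by
    intro k
    rw [hpow k, hL, smul_smul, smul_eq_mul]
  calc ∑' k : ℕ, (k.factorial : ℂ)⁻¹ • (M ^ k *ᵥ one)
      = ∑' k : ℕ, L ((k.factorial : ℂ)⁻¹ • (c * d) ^ k) := by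
        congr 1; funext k; exact h1 k
    _ = L (∑' k : ℕ, (k.factorial : ℂ)⁻¹ • (c * d) ^ k) :=
        (ContinuousLinearMap.map_tsum _ (expSeries_summable' (𝕂 := ℂ) (c * d))).symm
    _ = exp (c * d) • one := by rw [hL, exp_eq_tsum ℂ]

/-- `⟪J 1, f⟫` is the sum of the `V(G)`-coordinates of `f`. -/
lemma inner_Jone (f : coneTailSpace n) :
    (inner ℂ (Jmap n (Function.const (Fin n) (1 : ℂ))) f : ℂ)
      = ∑ a, (f : ∀ _ : ConeTailV n, ℂ) (Sum.inl a) := by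
  rw [Jmap_eq, sum_inner]
  refine Finset.sum_congr rfl fun a _ => ?_
  rw [inner_smul_left, inner_stdVec]
  simp

end ConeTailPSTAux

set_option maxHeartbeats 1600000 in
open ConeTailPSTAux NormedSpace in
/-- Let `G` be a connected `d`-regular graph on `n` vertices with perfect state transfer
between vertices `u` and `v` at time `τ` (`|⟨e_v, e^{-iτA(G)} e_u⟩| = 1`), and let `H` be
the cone `Ĝ = K_1 + G` with a one-way infinite path attached at the apex.  Then
`|⟨e_v, e^{-iτA(H)} e_u⟩| ≥ 1 - 2/n`: perfect state transfer survives the tail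
asymptotically. -/
theorem cone_tail_pst (n d : ℕ) (G : SimpleGraph (Fin n))
    [DecidableRel G.Adj] (hconn : G.Connected) (hreg : G.IsRegularOfDegree d)
    (u v : Fin n) (τ : ℝ)
    (hpst : ‖NormedSpace.exp ((-(τ : ℂ) * Complex.I) • G.adjMatrix ℂ) v u‖ = 1)
    (A : coneTailSpace n →L[ℂ] coneTailSpace n) (hsa : IsSelfAdjoint A)
    (hA : ∀ x y : ConeTailV n, (inner ℂ (stdVec x) (A (stdVec y)) : ℂ)
      = if coneTailAdj n G x y then 1 else 0) :
    1 - 2 / (n : ℝ)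
      ≤ ‖
          (inner ℂ (stdVec (Sum.inl v : ConeTailV n))
            (NormedSpace.exp ((-(τ : ℂ) * Complex.I) • A)
              (stdVec (Sum.inl u : ConeTailV n))))‖ := by
  have hn : 0 < n := Fin.pos u
  have hnR : (0 : ℝ) < n := by exact_mod_cast hn
  have hnC : (n : ℂ) ≠ 0 := by exact_mod_cast hn.ne'
  set c : ℂ := -(τ : ℂ) * Complex.I with hc
  set M : Matrix (Fin n) (Fin n) ℂ := c • G.adjMatrix ℂ with hM
  set E : Matrix (Fin n) (Fin n) ℂ := exp M with hE
  set B : coneTailSpace n →L[ℂ] coneTailSpace n := c • A with hB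
  set U : coneTailSpace n →L[ℂ] coneTailSpace n := exp B with hU
  set one : Fin n → ℂ := Function.const (Fin n) (1 : ℂ) with hone
  -- the sum-zero parts of the standard basis vectors
  set gu : Fin n → ℂ := Pi.single u 1 - (n : ℂ)⁻¹ • one with hgu
  set gv : Fin n → ℂ := Pi.single v 1 - (n : ℂ)⁻¹ • one with hgv
  have hsum_one : ∑ a, one a = (n : ℂ) := by simp [hone]
  have hsum_single : ∀ w : Fin n, ∑ a, Pi.single (M := fun _ => ℂ) w 1 a = 1 := by
    intro w; simp [Finset.sum_pi_single']
  have hsum_gu : ∑ a, gu a = 0 := by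
    simp only [hgu, Pi.sub_apply, Pi.smul_apply, smul_eq_mul, Finset.sum_sub_distrib,
      ← Finset.mul_sum, hsum_single u]
    rw [hsum_one]
    field_simp
    ring
  have hsum_gv : ∑ a, gv a = 0 := by
    simp only [hgv, Pi.sub_apply, Pi.smul_apply, smul_eq_mul, Finset.sum_sub_distrib,
      ← Finset.mul_sum, hsum_single v]
    rw [hsum_one]
    field_simp
    ring
  -- unitarity of U
  have hstarB : star B = -B := by
    have hcc : star c = -c := by
      simp [hc, Complex.star_def]
    rw [hB, star_smul, hsa.star_eq, hcc, neg_smul]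
  have hUU : star U * U = 1 := by
    rw [hU, star_exp, hstarB]
    have h := NormedSpace.exp_add_of_commute_of_mem_ball (𝕂 := ℂ) (Commute.neg_left (Commute.refl B))
      ((expSeries_radius_eq_top ℂ (coneTailSpace n →L[ℂ] coneTailSpace n)).symm ▸ edist_lt_top _ _)
      ((expSeries_radius_eq_top ℂ (coneTailSpace n →L[ℂ] coneTailSpace n)).symm ▸ edist_lt_top _ _)
    rw [neg_add_cancel, exp_zero] at h
    exact h.symm
  have hUiso : ∀ x : coneTailSpace n, ‖U x‖ = ‖x‖ := by
    intro x
    have h1 : (inner ℂ (U x) (U x) : ℂ) = inner ℂ x x := by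
      rw [← ContinuousLinearMap.adjoint_inner_left U x (U x)]
      rw [← ContinuousLinearMap.star_eq_adjoint]
      have : (star U) (U x) = (star U * U) x := rfl
      rw [this, hUU]
      rfl
    rw [norm_eq_sqrt_re_inner (𝕜 := ℂ), norm_eq_sqrt_re_inner (𝕜 := ℂ) (x := x), h1]
  -- the invariant-subspace computation
  obtain ⟨hexp_gu, hEu0⟩ := exp_cA_Jmap G hreg A hA c gu hsum_gu
  obtain ⟨hexp_gv, hEv0⟩ :=
    exp_cA_Jmap G hreg A hA (-c) gv hsum_gv
  set w : coneTailSpace n := U (Jmap n one) with hw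
  -- ⟪J gv, w⟫ = 0
  have hortho : (inner ℂ (Jmap n gv) w : ℂ) = 0 := by
    rw [hw, ← ContinuousLinearMap.adjoint_inner_left U (Jmap n one) (Jmap n gv),
      ← ContinuousLinearMap.star_eq_adjoint]
    have hstarU : star U = exp ((-c) • A) := by
      rw [hU, star_exp, hstarB, hB, ← neg_smul]
    rw [hstarU, hexp_gv]
    rw [← inner_conj_symm, inner_Jone]
    have : ∀ a : Fin n, ((Jmap n (exp ((-c) • G.adjMatrix ℂ) *ᵥ gv)
        : coneTailSpace n) : ∀ _ : ConeTailV n, ℂ) (Sum.inl a)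
        = (exp ((-c) • G.adjMatrix ℂ) *ᵥ gv) a := fun a => Jmap_apply_inl _ a
    simp only [this]
    rw [hEv0]
    simp
  -- ⟪J one, J one⟫ = n and the norm of J one
  have hJone : (inner ℂ (Jmap n one) (Jmap n one) : ℂ) = (n : ℂ) := by
    rw [inner_Jone]
    have : ∀ a : Fin n, ((Jmap n one : coneTailSpace n) : ∀ _ : ConeTailV n, ℂ) (Sum.inl a)
        = one a := fun a => Jmap_apply_inl _ a
    simp only [this]
    exact hsum_one
  have hnormJone : ‖Jmap n one‖ * ‖Jmap n one‖ = (n : ℝ) := by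
    have h := inner_self_eq_norm_mul_norm (𝕜 := ℂ) (Jmap n one)
    rw [hJone] at h
    simpa using h.symm
  -- bound on ⟪J one, w⟫
  have hbound : ‖(inner ℂ (Jmap n one) w : ℂ)‖ ≤ (n : ℝ) := by
    calc ‖(inner ℂ (Jmap n one) w : ℂ)‖ ≤ ‖Jmap n one‖ * ‖w‖ := by
          exact norm_inner_le_norm _ _
      _ = (n : ℝ) := by rw [hw, hUiso, hnormJone]
  -- the main value
  have hdecomp : stdVec (Sum.inl u : ConeTailV n)
      = Jmap n gu + (n : ℂ)⁻¹ • Jmap n one := by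
    rw [stdVec_inl_eq_Jmap, ← _root_.map_smul, ← map_add]
    congr 1
    rw [hgu]
    abel
  have hvdecomp : stdVec (Sum.inl v : ConeTailV n)
      = Jmap n gv + (n : ℂ)⁻¹ • Jmap n one := by
    rw [stdVec_inl_eq_Jmap, ← _root_.map_smul, ← map_add]
    congr 1
    rw [hgv]
    abel
  have hEgu : (E *ᵥ gu) v = E v u - (n : ℂ)⁻¹ * exp (c * d) := by
    rw [hgu, Matrix.mulVec_sub, Matrix.mulVec_smul]
    have h1 : (E *ᵥ Pi.single u 1) v = E v u := by
      rw [Matrix.mulVec_single]; simp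
    have h2 : E *ᵥ one = exp (c * d) • one := by
      rw [hE, hM, hone]
      exact exp_matrix_mulVec_const G hreg c
    rw [Pi.sub_apply, h1]
    congr 1
    rw [Pi.smul_apply, h2, Pi.smul_apply, hone]
    simp
  -- compute the inner product
  have hmain : (inner ℂ (stdVec (Sum.inl v : ConeTailV n)) (U (stdVec (Sum.inl u : ConeTailV n))) : ℂ)
      = E v u - (n : ℂ)⁻¹ * exp (c * d)
        + (n : ℂ)⁻¹ * ((n : ℂ)⁻¹ * (inner ℂ (Jmap n one) w : ℂ)) := by
    rw [hdecomp, map_add, _root_.map_smul, inner_add_right, inner_smul_right]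
    have h1 : (inner ℂ (stdVec (Sum.inl v : ConeTailV n)) (U (Jmap n gu)) : ℂ)
        = E v u - (n : ℂ)⁻¹ * exp (c * d) := by
      rw [hU, hB, hexp_gu, inner_stdVec, Jmap_apply_inl, ← hM, ← hE, hEgu]
    have h2 : (inner ℂ (stdVec (Sum.inl v : ConeTailV n)) w : ℂ)
        = (n : ℂ)⁻¹ * (inner ℂ (Jmap n one) w : ℂ) := by
      rw [hvdecomp, inner_add_left, hortho, inner_smul_left]
      simp
    rw [h1, ← hw, h2]
  -- the error bound
  have habs_exp : ‖exp (c * d)‖ = 1 := by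
    rw [← Complex.exp_eq_exp_ℂ, Complex.norm_exp]
    have : (c * d).re = 0 := by
      simp [hc, Complex.mul_re, Complex.mul_im]
    rw [this, Real.exp_zero]
  have habs_E : ‖E v u‖ = 1 := hpst
  have herr : ‖(n : ℂ)⁻¹ * exp (c * d)
        - (n : ℂ)⁻¹ * ((n : ℂ)⁻¹ * (inner ℂ (Jmap n one) w : ℂ))‖ ≤ 2 / (n : ℝ) := by
    have h1 : ‖(n : ℂ)⁻¹ * exp (c * d)‖ = 1 / (n : ℝ) := by
      rw [norm_mul, habs_exp]
      simp
    have h2 : ‖(n : ℂ)⁻¹ * ((n : ℂ)⁻¹ * (inner ℂ (Jmap n one) w : ℂ))‖ ≤ 1 / (n : ℝ) := by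
      rw [norm_mul, norm_mul]
      have : ‖(n : ℂ)⁻¹‖ = ((n : ℝ))⁻¹ := by
        simp
      rw [this]
      calc ((n : ℝ))⁻¹ * (((n : ℝ))⁻¹ * ‖(inner ℂ (Jmap n one) w : ℂ)‖)
          ≤ ((n : ℝ))⁻¹ * (((n : ℝ))⁻¹ * (n : ℝ)) := by
            apply mul_le_mul_of_nonneg_left _ (by positivity)
            apply mul_le_mul_of_nonneg_left hbound (by positivity)
        _ = 1 / (n : ℝ) := by field_simp
    calc ‖(n : ℂ)⁻¹ * exp (c * d)
          - (n : ℂ)⁻¹ * ((n : ℂ)⁻¹ * (inner ℂ (Jmap n one) w : ℂ))‖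
        ≤ ‖(n : ℂ)⁻¹ * exp (c * d)‖
          + ‖(n : ℂ)⁻¹ * ((n : ℂ)⁻¹ * (inner ℂ (Jmap n one) w : ℂ))‖ := by
          exact norm_sub_le _ _
      _ ≤ 1 / (n : ℝ) + 1 / (n : ℝ) := by rw [h1]; linarith
      _ = 2 / (n : ℝ) := by ring
  -- conclude
  have hval : (inner ℂ (stdVec (Sum.inl v : ConeTailV n))
      (NormedSpace.exp ((-(τ : ℂ) * Complex.I) • A) (stdVec (Sum.inl u : ConeTailV n))) : ℂ)
      = E v u - ((n : ℂ)⁻¹ * exp (c * d)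
        - (n : ℂ)⁻¹ * ((n : ℂ)⁻¹ * (inner ℂ (Jmap n one) w : ℂ))) := by
    rw [← hc, ← hB, ← hU, hmain]
    ring
  rw [hval]
  calc 1 - 2 / (n : ℝ)
      ≤ ‖E v u‖ - ‖(n : ℂ)⁻¹ * exp (c * d)
          - (n : ℂ)⁻¹ * ((n : ℂ)⁻¹ * (inner ℂ (Jmap n one) w : ℂ))‖ := by
        rw [habs_E]; linarith
    _ ≤ _ := by
        have h := norm_sub_norm_le (E v u)
          ((n : ℂ)⁻¹ * exp (c * d) - (n : ℂ)⁻¹ * ((n : ℂ)⁻¹ * (inner ℂ (Jmap n one) w : ℂ)))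
        simpa using h
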